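/- If the variational distance d_v(P,Q) = Σ_x |P(x) - Q(x)| between two probability distributions P and Q on a finite alphabet X satisfies d_v(P,Q) < 1/2, then the difference of their Shannon entropies satisfies |H(P) - H(Q)| ≤ -d_v(P,Q) · log(d_v(P,Q)/|X|). -/

import Mathlib

open Finset

lemma my_L2 {d : ℝ} (h0 : 0 ≤ d) (h2 : d ≤ 1/2) :
    Real.negMulLog (1 - d) ≤ Real.negMulLog d := by
  rcases eq_or_lt_of_le h0 with rfl | hd
  · simp
  have hb : (0:ℝ) < 1 - d := by linarith
  have hab : d ≤ 1 - d := by linarith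
  have h1 : 1 - d / (1 - d) ≤ Real.log (1 - d) - Real.log d := by
    have := Real.one_sub_inv_le_log_of_pos (div_pos hb hd)
    rw [Real.log_div hb.ne' hd.ne', inv_div] at this
    linarith
  have h2' : -Real.log (1 - d) ≤ d / (1 - d) := by
    have := Real.log_le_sub_one_of_pos (inv_pos.2 hb)
    rw [Real.log_inv] at this
    have hinv : (1 - d)⁻¹ - 1 = d / (1 - d) := by field_simp; ring
    linarith [hinv ▸ this]
  have key : (1 - d) * (d / (1 - d)) = d := by field_simp
  have h1' : d * (1 - d / (1 - d)) ≤ d * (Real.log (1 - d) - Real.log d) :=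
    mul_le_mul_of_nonneg_left h1 hd.le
  have h2'' : (1 - d - d) * (-Real.log (1 - d)) ≤ (1 - d - d) * (d / (1 - d)) :=
    mul_le_mul_of_nonneg_left h2' (by linarith)
  simp only [Real.negMulLog]
  nlinarith [h1', h2'', key]

lemma my_subadd {x y : ℝ} (hx : 0 ≤ x) (hy : 0 ≤ y) :
    Real.negMulLog (x + y) ≤ Real.negMulLog x + Real.negMulLog y := by
  simp only [Real.negMulLog, neg_mul]
  have hx' : -(x * Real.log (x + y)) ≤ -(x * Real.log x) := by
    rcases eq_or_lt_of_le hx with rfl | hx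
    · simp
    · have := Real.log_le_log hx (by linarith : x ≤ x + y)
      nlinarith
  have hy' : -(y * Real.log (x + y)) ≤ -(y * Real.log y) := by
    rcases eq_or_lt_of_le hy with rfl | hy
    · simp
    · have := Real.log_le_log hy (by linarith : y ≤ x + y)
      nlinarith
  nlinarith

lemma my_L3b {q d : ℝ} (hq : 0 ≤ q) (hd : 0 ≤ d) (hqd : q + d ≤ 1) :
    Real.negMulLog q ≤ Real.negMulLog (q + d) + Real.negMulLog (1 - d) := by
  by_cases hq1 : q = 1
  · have hd0 : d = 0 := by linarith [hq1 ▸ hqd]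
    simp [hq1, hd0]
  have hq1' : q < 1 := lt_of_le_of_ne (by linarith) hq1
  have hden : (0:ℝ) < 1 - q := by linarith
  set l : ℝ := (1 - q - d) / (1 - q) with hl
  set m : ℝ := d / (1 - q) with hm
  have hl0 : 0 ≤ l := div_nonneg (by linarith) hden.le
  have hm0 : 0 ≤ m := div_nonneg hd hden.le
  have hlm : l + m = 1 := by
    rw [hl, hm, ← add_div, div_eq_one_iff_eq hden.ne']; ring
  have hmem1 : q ∈ Set.Ici (0:ℝ) := hq
  have hmem2 : (1:ℝ) ∈ Set.Ici (0:ℝ) := by norm_num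
  have c1 := Real.concaveOn_negMulLog.2 hmem1 hmem2 hl0 hm0 hlm
  have c2 := Real.concaveOn_negMulLog.2 hmem1 hmem2 hm0 hl0 (by linarith)
  have e1 : l * q + m * 1 = q + d := by
    rw [hl, hm, div_mul_eq_mul_div, mul_one, ← add_div, div_eq_iff hden.ne']; ring
  have e2 : m * q + l * 1 = 1 - d := by
    rw [hl, hm, div_mul_eq_mul_div, mul_one, ← add_div, div_eq_iff hden.ne']; ring
  simp only [smul_eq_mul] at c1 c2
  rw [e1] at c1
  rw [e2] at c2
  have : (l + m) * Real.negMulLog q + (l + m) * Real.negMulLog 1 ≤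
      Real.negMulLog (q + d) + Real.negMulLog (1 - d) := by linarith
  rw [hlm] at this
  simpa using this

lemma my_keyA {p q : ℝ} (hq0 : 0 ≤ q) (hp1 : p ≤ 1) (hqp : q ≤ p)
    (hd : p - q ≤ 1/2) :
    |Real.negMulLog p - Real.negMulLog q| ≤ Real.negMulLog (p - q) := by
  set d := p - q with hdd
  have hd0 : 0 ≤ d := by linarith
  rw [abs_le]
  constructor
  · have h1 : Real.negMulLog q ≤ Real.negMulLog (q + d) + Real.negMulLog (1 - d) :=
      my_L3b hq0 hd0 (by rw [hdd]; linarith)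
    have h2 : Real.negMulLog (1 - d) ≤ Real.negMulLog d := my_L2 hd0 hd
    have hqd : q + d = p := by rw [hdd]; ring
    rw [hqd] at h1
    linarith
  · have h1 : Real.negMulLog (q + d) ≤ Real.negMulLog q + Real.negMulLog d :=
      my_subadd hq0 hd0
    have hqd : q + d = p := by rw [hdd]; ring
    rw [hqd] at h1
    linarith

lemma my_keyA_abs {p q : ℝ} (hp0 : 0 ≤ p) (hp1 : p ≤ 1) (hq0 : 0 ≤ q) (hq1 : q ≤ 1)
    (hd : |p - q| ≤ 1/2) :
    |Real.negMulLog p - Real.negMulLog q| ≤ Real.negMulLog |p - q| := by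
  rcases le_total q p with hle | hle
  · rw [abs_of_nonneg (sub_nonneg.2 hle)]
    exact my_keyA hq0 hp1 hle (by rwa [abs_of_nonneg (sub_nonneg.2 hle)] at hd)
  · rw [abs_of_nonpos (sub_nonpos.2 hle), abs_sub_comm, neg_sub]
    refine my_keyA hp0 hq1 hle ?_
    rw [abs_sub_comm, abs_of_nonneg (sub_nonneg.2 hle)] at hd
    exact hd

lemma my_jensen {X : Type*} [Fintype X] (a : X → ℝ) (ha : ∀ x, 0 ≤ a x)
    (hX : 0 < Fintype.card X) :
    ∑ x, Real.negMulLog (a x) ≤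
      -(∑ x, a x) * Real.log ((∑ x, a x) / (Fintype.card X : ℝ)) := by
  set n : ℝ := (Fintype.card X : ℝ) with hn
  have hn0 : 0 < n := by rw [hn]; exact_mod_cast hX
  have hw : ∑ _x : X, (1/n) = 1 := by
    rw [Finset.sum_const, Finset.card_univ, nsmul_eq_mul]
    field_simp; exact hn.symm
  have hmem : ∀ x ∈ Finset.univ, a x ∈ Set.Ici (0:ℝ) := fun x _ => ha x
  have hwpos : ∀ x ∈ Finset.univ (α := X), 0 ≤ (1/n : ℝ) := fun _ _ => by positivity
  have J := Real.concaveOn_negMulLog.le_map_sum hwpos hw hmem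
  simp only [smul_eq_mul] at J
  have hs : ∑ x, (1/n) * a x = (∑ x, a x) / n := by
    rw [← Finset.mul_sum]; ring
  rw [hs] at J
  set s := ∑ x, a x with hss
  have J2 : ∑ x, (1/n) * Real.negMulLog (a x) = (∑ x, Real.negMulLog (a x)) / n := by
    rw [← Finset.mul_sum]; ring
  rw [J2] at J
  have : (∑ x, Real.negMulLog (a x)) ≤ n * Real.negMulLog (s / n) := by
    rw [div_le_iff₀ hn0] at J; linarith
  refine this.trans ?_
  simp only [Real.negMulLog]
  have hcancel : n * (s / n) = s := by field_simp
  have heq : n * (-(s / n) * Real.log (s / n)) = -s * Real.log (s / n) := calc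
    n * (-(s / n) * Real.log (s / n))
      = -(n * (s / n)) * Real.log (s / n) := by ring
    _ = -s * Real.log (s / n) := by rw [hcancel]
  exact le_of_eq heq

/-- Shannon entropy (base 2) of a distribution on a finite alphabet. -/
noncomputable def ent {X : Type*} [Fintype X] (P : X → ℝ) : ℝ :=
  -∑ x, P x * Real.logb 2 (P x)

/-- Variational (ℓ1) distance between two distributions. -/
noncomputable def dv {X : Type*} [Fintype X] (P Q : X → ℝ) : ℝ :=
  ∑ x, |P x - Q x|

theorem stmt0 {X : Type*} [Fintype X]
    (P Q : X → ℝ)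
    (hP0 : ∀ x, 0 ≤ P x) (hP1 : ∑ x, P x = 1)
    (hQ0 : ∀ x, 0 ≤ Q x) (hQ1 : ∑ x, Q x = 1)
    (h : dv P Q < 1 / 2) :
    |ent P - ent Q| ≤ -(dv P Q) * Real.logb 2 (dv P Q / (Fintype.card X : ℝ)) := by
  rcases isEmpty_or_nonempty X with hX | hX
  · simp [Finset.univ_eq_empty] at hP1
  have hcard : 0 < Fintype.card X := Fintype.card_pos
  have hs0 : 0 ≤ dv P Q := Finset.sum_nonneg (fun x _ => abs_nonneg _)
  have hterm : ∀ x, |P x - Q x| ≤ dv P Q := fun x =>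
    Finset.single_le_sum (f := fun i => |P i - Q i|) (fun i _ => abs_nonneg _)
      (Finset.mem_univ x)
  have hP_le : ∀ x, P x ≤ 1 := fun x => by
    rw [← hP1]; exact Finset.single_le_sum (fun i _ => hP0 i) (Finset.mem_univ x)
  have hQ_le : ∀ x, Q x ≤ 1 := fun x => by
    rw [← hQ1]; exact Finset.single_le_sum (fun i _ => hQ0 i) (Finset.mem_univ x)
  have key : ∀ x, |Real.negMulLog (P x) - Real.negMulLog (Q x)| ≤
      Real.negMulLog |P x - Q x| := fun x =>
    my_keyA_abs (hP0 x) (hP_le x) (hQ0 x) (hQ_le x) (le_of_lt (lt_of_le_of_lt (hterm x) h))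
  have hlog2 : (0:ℝ) < Real.log 2 := Real.log_pos (by norm_num)
  -- rewrite entropies in terms of negMulLog
  have entdef : ∀ R : X → ℝ, ent R = (∑ x, Real.negMulLog (R x)) / Real.log 2 := by
    intro R
    simp only [ent, Real.logb, Real.negMulLog, neg_mul, Finset.sum_neg_distrib,
      Finset.sum_div, neg_div, mul_div_assoc]
  have rhsdef : -(dv P Q) * Real.logb 2 (dv P Q / (Fintype.card X : ℝ)) =
      (-(dv P Q) * Real.log (dv P Q / (Fintype.card X : ℝ))) / Real.log 2 := by
    rw [Real.logb]; ring
  rw [entdef, entdef, rhsdef, div_sub_div_same, abs_div, abs_of_pos hlog2]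
  have main : |∑ x, Real.negMulLog (P x) - ∑ x, Real.negMulLog (Q x)| ≤
      -(dv P Q) * Real.log (dv P Q / (Fintype.card X : ℝ)) := by
    calc |∑ x, Real.negMulLog (P x) - ∑ x, Real.negMulLog (Q x)|
        = |∑ x, (Real.negMulLog (P x) - Real.negMulLog (Q x))| := by
          rw [Finset.sum_sub_distrib]
      _ ≤ ∑ x, |Real.negMulLog (P x) - Real.negMulLog (Q x)| :=
          Finset.abs_sum_le_sum_abs _ _
      _ ≤ ∑ x, Real.negMulLog |P x - Q x| := Finset.sum_le_sum (fun x _ => key x)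
      _ ≤ -(∑ x, |P x - Q x|) * Real.log ((∑ x, |P x - Q x|) / (Fintype.card X : ℝ)) :=
          my_jensen _ (fun x => abs_nonneg _) hcard
      _ = -(dv P Q) * Real.log (dv P Q / (Fintype.card X : ℝ)) := rfl
  gcongr
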